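/- arXiv:1707.07874 — 3 statements merged into one kernel-verified Lean document; each statement's English description precedes it below -/
import Mathlib

section
/- For every N ≥ 1 and all w, z ∈ ℝ^N: (i) ∫_{ℝ^N} |M(v−w) − M(v−z)| dv ≤ 2, and (ii) if |w−z| < 1 then ∫_{ℝ^N} |M(v−w) − M(v−z)| dv ≤ (|w−z| / (1 − |w−z|))^{1/2}. In other words, ‖M(·−w) − M(·−z)‖_{L¹(ℝ^N)} ≤ 2 ∧ (|w−z|/(1−|w−z|)^+)^{1/2}. -/
open MeasureTheory Real RealInnerProductSpace

/-- The standard Gaussian (Maxwellian) density on `ℝ^N`. -/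
noncomputable def gaussM (N : ℕ) (v : EuclideanSpace ℝ (Fin N)) : ℝ :=
  (2 * Real.pi) ^ (-(N : ℝ) / 2) * Real.exp (-‖v‖ ^ 2 / 2)

lemma gaussM_pos (N : ℕ) (v : EuclideanSpace ℝ (Fin N)) : 0 < gaussM N v := by
  unfold gaussM; positivity

lemma gaussM_eq (N : ℕ) (v : EuclideanSpace ℝ (Fin N)) :
    gaussM N v = (2 * Real.pi) ^ (-(N : ℝ) / 2) * Real.exp (-(1/2 : ℝ) * ‖v‖ ^ 2) := by
  unfold gaussM; ring_nf

lemma exp_integrable (N : ℕ) : Integrable (fun v : EuclideanSpace ℝ (Fin N) =>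
    Real.exp (-(1/2 : ℝ) * ‖v‖ ^ 2)) := by
  have h := (GaussianFourier.integrable_cexp_neg_mul_sq_norm_add
    (V := EuclideanSpace ℝ (Fin N)) (b := (1/2 : ℂ)) (by norm_num) 0 0).norm
  convert h using 2 with v
  simp [Complex.norm_exp]
  norm_cast

lemma gaussM_integrable (N : ℕ) : Integrable (gaussM N) := by
  have : gaussM N = fun v => (2 * Real.pi) ^ (-(N : ℝ) / 2) *
      Real.exp (-(1/2 : ℝ) * ‖v‖ ^ 2) := funext (gaussM_eq N)
  rw [this]
  exact (exp_integrable N).const_mul _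

lemma gaussM_integral (N : ℕ) : ∫ v, gaussM N v = 1 := by
  simp_rw [gaussM_eq N _]
  rw [integral_const_mul]
  have h1 : ∫ (a : EuclideanSpace ℝ (Fin N)), rexp (-(1/2 : ℝ) * ‖a‖ ^ 2)
      = (2 * π) ^ ((N:ℝ)/2) := by
    rw [GaussianFourier.integral_rexp_neg_mul_sq_norm (by norm_num : (0:ℝ) < 1/2)]
    rw [show π / (1/2 : ℝ) = 2 * π by ring]
    norm_num [finrank_euclideanSpace_fin]
  rw [h1, ← Real.rpow_add (by positivity)]
  rw [show (-(N:ℝ)/2 + N/2) = 0 by ring, Real.rpow_zero]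

lemma gaussM_integrable_shift (N : ℕ) (c : EuclideanSpace ℝ (Fin N)) :
    Integrable (fun v => gaussM N (v - c)) :=
  (gaussM_integrable N).comp_sub_right c

lemma gaussM_integral_shift (N : ℕ) (c : EuclideanSpace ℝ (Fin N)) :
    ∫ v, gaussM N (v - c) = 1 := by
  rw [integral_sub_right_eq_self, gaussM_integral]

lemma gaussM_sq_div (N : ℕ) (a u : EuclideanSpace ℝ (Fin N)) :
    (gaussM N (u - a))^2 / gaussM N u
      = Real.exp (‖a‖^2) * gaussM N (u - (2:ℝ) • a) := by
  unfold gaussM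
  set c : ℝ := (2 * Real.pi) ^ (-(N : ℝ) / 2) with hc
  have hc0 : 0 < c := by rw [hc]; positivity
  have key : ∀ x y : ℝ, (c * Real.exp x)^2 / (c * Real.exp y)
      = c * Real.exp (2*x - y) := by
    intro x y
    rw [Real.exp_sub, ← Real.exp_one_rpow (2*x)]
    rw [Real.exp_one_rpow, show Real.exp (2*x) = Real.exp x ^ 2 by
      rw [← Real.exp_nat_mul]; norm_num]
    field_simp
  rw [key]
  have hexp : 2 * (-‖u - a‖^2/2) - (-‖u‖^2/2)
      = ‖a‖^2 + -‖u - (2:ℝ) • a‖^2/2 := by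
    have h1 : ‖u - a‖^2 = ‖u‖^2 - 2*⟪u,a⟫ + ‖a‖^2 := norm_sub_sq_real u a
    have h2 : ‖u - (2:ℝ)•a‖^2 = ‖u‖^2 - 2*⟪u,(2:ℝ)•a⟫ + ‖(2:ℝ)•a‖^2 :=
      norm_sub_sq_real u _
    have h3 : ⟪u,(2:ℝ)•a⟫ = 2*⟪u,a⟫ := real_inner_smul_right u a 2
    have h4 : ‖(2:ℝ)•a‖^2 = 4*‖a‖^2 := by
      rw [norm_smul]; simp [Real.norm_eq_abs]; ring
    rw [h1, h2, h3, h4]; ring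
  rw [hexp, Real.exp_add]; ring

lemma gaussM_ratio_integral (N : ℕ) (w z : EuclideanSpace ℝ (Fin N)) :
    ∫ v, (gaussM N (v - w))^2 / gaussM N (v - z) = Real.exp (‖w - z‖^2) := by
  have hpt : ∀ v : EuclideanSpace ℝ (Fin N),
      (gaussM N (v - w))^2 / gaussM N (v - z)
      = Real.exp (‖w - z‖^2) * gaussM N (v - (z + (2:ℝ) • (w - z))) := by
    intro v
    have h := gaussM_sq_div N (w - z) (v - z)
    rw [show v - z - (w - z) = v - w by abel] at h
    rw [show v - z - (2:ℝ) • (w - z) = v - (z + (2:ℝ) • (w - z)) by abel] at h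
    exact h
  simp_rw [hpt]
  rw [integral_const_mul, gaussM_integral_shift, mul_one]

lemma gaussM_ratio_integrable (N : ℕ) (w z : EuclideanSpace ℝ (Fin N)) :
    Integrable (fun v => (gaussM N (v - w))^2 / gaussM N (v - z)) := by
  have hpt : (fun v : EuclideanSpace ℝ (Fin N) =>
      (gaussM N (v - w))^2 / gaussM N (v - z))
      = fun v => Real.exp (‖w - z‖^2) * gaussM N (v - (z + (2:ℝ) • (w - z))) := by
    funext v
    have h := gaussM_sq_div N (w - z) (v - z)
    rw [show v - z - (w - z) = v - w by abel] at h
    rw [show v - z - (2:ℝ) • (w - z) = v - (z + (2:ℝ) • (w - z)) by abel] at h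
    exact h
  rw [hpt]
  exact (gaussM_integrable_shift N _).const_mul _

lemma abs_key (x y t : ℝ) (hy : 0 < y) (ht : 0 < t) :
    |x - y| ≤ (x - y)^2 / y * (1/(2*t)) + t/2 * y := by
  have hEq : (x - y)^2 / y * (1/(2*t)) + t/2 * y
      = ((x-y)^2 + t^2*y^2) / (2*t*y) := by field_simp
  rw [hEq, le_div_iff₀ (by positivity)]
  nlinarith [sq_nonneg (|x - y| - t*y), sq_abs (x - y), abs_nonneg (x - y)]

/-- For every `N ≥ 1` and `w, z ∈ ℝ^N`:
(i) `‖M(· - w) - M(· - z)‖_{L¹} ≤ 2`, and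
(ii) if `|w - z| < 1` then `‖M(· - w) - M(· - z)‖_{L¹} ≤ (|w - z| / (1 - |w - z|))^{1/2}`. -/
theorem maxwellian_translate_diff_L1 (N : ℕ) (hN : 1 ≤ N)
    (w z : EuclideanSpace ℝ (Fin N)) :
    (∫ v : EuclideanSpace ℝ (Fin N), |gaussM N (v - w) - gaussM N (v - z)| ≤ 2) ∧
    (‖w - z‖ < 1 →
      ∫ v : EuclideanSpace ℝ (Fin N), |gaussM N (v - w) - gaussM N (v - z)|
        ≤ Real.sqrt (‖w - z‖ / (1 - ‖w - z‖))) := by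
  have hInt1 := gaussM_integrable_shift N w
  have hInt2 := gaussM_integrable_shift N z
  have hI1 := gaussM_integral_shift N w
  have hI2 := gaussM_integral_shift N z
  have hquad_eq : (fun v : EuclideanSpace ℝ (Fin N) =>
        (gaussM N (v - w) - gaussM N (v - z))^2 / gaussM N (v - z))
      = fun v => (gaussM N (v - w))^2 / gaussM N (v - z)
          - 2 * gaussM N (v - w) + gaussM N (v - z) := by
    funext v
    have h := (gaussM_pos N (v - z)).ne'
    field_simp
    ring
  have hsub : Integrable (fun v : EuclideanSpace ℝ (Fin N) =>
      (gaussM N (v - w))^2 / gaussM N (v - z) - 2 * gaussM N (v - w)) := by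
    exact (gaussM_ratio_integrable N w z).sub (hInt1.const_mul 2)
  have hquad_int : Integrable (fun v : EuclideanSpace ℝ (Fin N) =>
      (gaussM N (v - w) - gaussM N (v - z))^2 / gaussM N (v - z)) := by
    rw [hquad_eq]
    exact hsub.add hInt2
  have hB : ∫ v : EuclideanSpace ℝ (Fin N),
        (gaussM N (v - w) - gaussM N (v - z))^2 / gaussM N (v - z)
      = Real.exp (‖w - z‖^2) - 1 := by
    rw [hquad_eq, integral_add hsub hInt2,
      integral_sub (gaussM_ratio_integrable N w z) (hInt1.const_mul 2),
      integral_const_mul, gaussM_ratio_integral, hI1, hI2]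
    ring
  constructor
  · have hmono : ∫ v : EuclideanSpace ℝ (Fin N),
          |gaussM N (v - w) - gaussM N (v - z)|
        ≤ ∫ v : EuclideanSpace ℝ (Fin N), (gaussM N (v - w) + gaussM N (v - z)) := by
      have habs : Integrable (fun v : EuclideanSpace ℝ (Fin N) =>
          |gaussM N (v - w) - gaussM N (v - z)|) := by
        exact (hInt1.sub hInt2).abs
      have hadd : Integrable (fun v : EuclideanSpace ℝ (Fin N) =>
          gaussM N (v - w) + gaussM N (v - z)) := by
        exact hInt1.add hInt2
      apply integral_mono habs hadd
      intro v
      dsimp only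
      have h1 := (gaussM_pos N (v - w)).le
      have h2 := (gaussM_pos N (v - z)).le
      exact abs_le.mpr ⟨by linarith, by linarith⟩
    rw [integral_add hInt1 hInt2, hI1, hI2] at hmono
    linarith
  · intro hlt
    rcases eq_or_lt_of_le (norm_nonneg (w - z)) with h0 | h0
    · have hwz : w = z := by
        have h : w - z = 0 := norm_eq_zero.mp h0.symm
        exact sub_eq_zero.mp h
      rw [hwz]
      simp
    · set ε := ‖w - z‖ with hεdef
      set C := ε / (1 - ε) with hCdef
      have hC : 0 < C := div_pos h0 (by linarith)
      set t := Real.sqrt C with htdef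
      have ht : 0 < t := Real.sqrt_pos.mpr hC
      have hpt : ∀ v : EuclideanSpace ℝ (Fin N),
          |gaussM N (v - w) - gaussM N (v - z)| ≤
          (gaussM N (v - w) - gaussM N (v - z))^2 / gaussM N (v - z) * (1/(2*t))
            + t/2 * gaussM N (v - z) :=
        fun v => abs_key _ _ t (gaussM_pos N (v - z)) ht
      have hmono : ∫ v : EuclideanSpace ℝ (Fin N),
            |gaussM N (v - w) - gaussM N (v - z)|
          ≤ ∫ v : EuclideanSpace ℝ (Fin N),
            ((gaussM N (v - w) - gaussM N (v - z))^2 / gaussM N (v - z) * (1/(2*t))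
              + t/2 * gaussM N (v - z)) := by
        have habs : Integrable (fun v : EuclideanSpace ℝ (Fin N) =>
            |gaussM N (v - w) - gaussM N (v - z)|) := by
          exact (hInt1.sub hInt2).abs
        have hR : Integrable (fun v : EuclideanSpace ℝ (Fin N) =>
            (gaussM N (v - w) - gaussM N (v - z))^2 / gaussM N (v - z) * (1/(2*t))
              + t/2 * gaussM N (v - z)) := by
          exact (hquad_int.mul_const _).add (hInt2.const_mul _)
        exact integral_mono habs hR hpt
      have hm1 : Integrable (fun v : EuclideanSpace ℝ (Fin N) =>
          (gaussM N (v - w) - gaussM N (v - z))^2 / gaussM N (v - z) * (1/(2*t))) := by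
        exact hquad_int.mul_const _
      have hm2 : Integrable (fun v : EuclideanSpace ℝ (Fin N) =>
          t/2 * gaussM N (v - z)) := by
        exact hInt2.const_mul _
      rw [integral_add hm1 hm2, integral_mul_const, integral_const_mul, hB, hI2] at hmono
      have hBC : Real.exp (ε^2) - 1 ≤ C := by
        have h1 : ε^2 ≤ ε := by nlinarith
        have h2 : Real.exp (ε^2) ≤ Real.exp ε := Real.exp_le_exp.mpr h1
        have h3 : 1 - ε ≤ Real.exp (-ε) := by
          have := Real.add_one_le_exp (-ε); linarith
        have h4 : (1 - ε) * Real.exp ε ≤ 1 := by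
          have h5 := mul_le_mul_of_nonneg_right h3 (Real.exp_pos ε).le
          rw [← Real.exp_add] at h5
          simp at h5
          linarith
        rw [hCdef, le_div_iff₀ (by linarith)]
        nlinarith [Real.exp_pos ε]
      have htC : t * t = C := Real.mul_self_sqrt hC.le
      have h6 : C * (1/(2*t)) = t/2 := by
        rw [← htC]; field_simp
      have h5 : (Real.exp (ε^2) - 1) * (1/(2*t)) ≤ C * (1/(2*t)) :=
        mul_le_mul_of_nonneg_right hBC (by positivity)
      calc ∫ v : EuclideanSpace ℝ (Fin N), |gaussM N (v - w) - gaussM N (v - z)|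
          ≤ (Real.exp (ε^2) - 1) * (1/(2*t)) + t/2 * 1 := hmono
        _ ≤ t := by linarith
        _ = Real.sqrt (ε / (1 - ε)) := by rw [htdef, hCdef]
end

section
/- Linear-Boltzmann moment formulas (Lemma 5.1, LB case): let N ≥ 1, let E : ℝ → ℝ^N be continuous and bounded, let s ≤ t, and let f ∈ L¹(ℝ^N) with ∫ |v| |f(v)| dv < ∞. Define f_{s,t}(v) = e^{-(t-s)} f(v − ∫_s^t E(r) dr) + ρ(f) ∫_s^t e^{-(t-σ)} M(v − ∫_σ^t E(r) dr) dσ. Then f_{s,t} ∈ L¹(ℝ^N), ρ(f_{s,t}) = ρ(f), and J(f_{s,t}) = e^{-(t-s)} J(f) + ρ(f) ∫_s^t e^{-(t-σ)} E(σ) dσ. -/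
open MeasureTheory

open Real

variable {N : ℕ}

lemma gaussM_nonneg (v : EuclideanSpace ℝ (Fin N)) : 0 ≤ gaussM N v := by
  unfold gaussM; positivity

lemma intg_gauss : Integrable (fun v : EuclideanSpace ℝ (Fin N) => Real.exp (-(1/2) * ‖v‖^2)) := by
  have := GaussianFourier.integrable_cexp_neg_mul_sq_norm_add (V := EuclideanSpace ℝ (Fin N))
    (b := (1/2 : ℂ)) (by norm_num) 0 0
  refine this.norm.congr ?_
  filter_upwards with v
  simp [Complex.norm_exp]
  norm_cast

lemma intg_gaussM : Integrable (gaussM N) := by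
  have := (intg_gauss (N := N)).const_mul ((2 * Real.pi) ^ (-(N : ℝ) / 2))
  refine this.congr ?_
  filter_upwards with v
  unfold gaussM; ring_nf

lemma integral_gaussM : ∫ v : EuclideanSpace ℝ (Fin N), gaussM N v = 1 := by
  unfold gaussM
  rw [MeasureTheory.integral_const_mul]
  have : ∀ v : EuclideanSpace ℝ (Fin N), Real.exp (-‖v‖^2/2) = Real.exp (-(1/2) * ‖v‖^2) := by
    intro v; ring_nf
  simp_rw [this]
  rw [GaussianFourier.integral_rexp_neg_mul_sq_norm (by norm_num : (0:ℝ) < 1/2)]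
  rw [finrank_euclideanSpace_fin]
  rw [show (π / (1/2) : ℝ) = 2 * π by ring]
  rw [← Real.rpow_add (by positivity)]
  rw [show (-(N:ℝ)/2 + (N:ℝ)/2 : ℝ) = 0 by ring, Real.rpow_zero]

lemma norm_gauss_bound (x : ℝ) (hx : 0 ≤ x) :
    x * Real.exp (-x^2 / 2) ≤ Real.exp (-(1/4) * x^2) := by
  have h1 : x ≤ Real.exp (x^2/4) := by
    have := Real.add_one_le_exp (x^2/4)
    nlinarith [sq_nonneg (x/2 - 1)]
  have h2 : Real.exp (-x^2/2) = Real.exp (-(x^2/4)) * Real.exp (-(1/4) * x^2) := by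
    rw [← Real.exp_add]; ring_nf
  rw [h2, ← mul_assoc]
  have h3 : x * Real.exp (-(x^2/4)) ≤ 1 := by
    rw [Real.exp_neg]
    rw [mul_inv_le_iff₀ (Real.exp_pos _), one_mul]
    exact h1
  nlinarith [Real.exp_pos (-(1/4) * x^2), Real.exp_nonneg (-(1/4)*x^2)]

lemma intg_norm_gaussM : Integrable (fun v : EuclideanSpace ℝ (Fin N) => ‖v‖ * gaussM N v) := by
  have hbig : Integrable (fun v : EuclideanSpace ℝ (Fin N) =>
      (2 * Real.pi) ^ (-(N : ℝ) / 2) * Real.exp (-(1/4) * ‖v‖^2)) := by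
    have := GaussianFourier.integrable_cexp_neg_mul_sq_norm_add (V := EuclideanSpace ℝ (Fin N))
      (b := (1/4 : ℂ)) (by norm_num) 0 0
    refine (this.norm.congr ?_).const_mul _
    filter_upwards with v
    simp [Complex.norm_exp]
    norm_cast
  refine hbig.mono' ?_ ?_
  · have hg : Continuous (gaussM N) := by unfold gaussM; fun_prop
    exact (continuous_norm.mul hg).aestronglyMeasurable
  · filter_upwards with v
    have h0 : (0:ℝ) ≤ (2 * Real.pi) ^ (-(N : ℝ) / 2) := by positivity
    have := norm_gauss_bound ‖v‖ (norm_nonneg v)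
    rw [Real.norm_eq_abs, abs_of_nonneg (by unfold gaussM; positivity)]
    unfold gaussM
    calc ‖v‖ * ((2 * Real.pi) ^ (-(N : ℝ) / 2) * Real.exp (-‖v‖^2/2))
        = (2 * Real.pi) ^ (-(N : ℝ) / 2) * (‖v‖ * Real.exp (-‖v‖^2/2)) := by ring
      _ ≤ (2 * Real.pi) ^ (-(N : ℝ) / 2) * Real.exp (-(1/4) * ‖v‖^2) := by
          exact mul_le_mul_of_nonneg_left this h0

lemma coord_abs_le_norm (v : EuclideanSpace ℝ (Fin N)) (i : Fin N) : |v i| ≤ ‖v‖ := by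
  rw [EuclideanSpace.norm_eq]
  rw [show |v i| = Real.sqrt (|v i|^2) by rw [Real.sqrt_sq_eq_abs, abs_abs]]
  apply Real.sqrt_le_sqrt
  rw [sq_abs]
  have := Finset.single_le_sum (f := fun j => ‖v j‖^2) (fun j _ => by positivity)
    (Finset.mem_univ i)
  simpa using this

lemma intg_coord_gaussM (i : Fin N) :
    Integrable (fun v : EuclideanSpace ℝ (Fin N) => v i * gaussM N v) := by
  refine intg_norm_gaussM.mono' ?_ ?_
  · have hg : Continuous (gaussM N) := by unfold gaussM; fun_prop
    have hc : Continuous (fun v : EuclideanSpace ℝ (Fin N) => v i) :=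
      (EuclideanSpace.proj i : EuclideanSpace ℝ (Fin N) →L[ℝ] ℝ).continuous
    exact (hc.mul hg).aestronglyMeasurable
  · filter_upwards with v
    rw [Real.norm_eq_abs, abs_mul, abs_of_nonneg (a := gaussM N v) (by unfold gaussM; positivity)]
    exact mul_le_mul_of_nonneg_right (coord_abs_le_norm v i) (by unfold gaussM; positivity)

lemma gaussM_neg (v : EuclideanSpace ℝ (Fin N)) : gaussM N (-v) = gaussM N v := by
  unfold gaussM; rw [norm_neg]

lemma integral_coord_gaussM (i : Fin N) :
    ∫ v : EuclideanSpace ℝ (Fin N), v i * gaussM N v = 0 := by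
  have h := MeasureTheory.integral_neg_eq_self
    (fun v : EuclideanSpace ℝ (Fin N) => v i * gaussM N v) volume
  have h2 : ∀ v : EuclideanSpace ℝ (Fin N), (-v) i * gaussM N (-v) = -(v i * gaussM N v) := by
    intro v
    rw [gaussM_neg]
    have : (-v) i = -(v i) := rfl
    rw [this]; ring
  simp_rw [h2] at h
  rw [integral_neg] at h
  linarith

variable (c : EuclideanSpace ℝ (Fin N))

lemma intg_gaussM_sub : Integrable (fun v : EuclideanSpace ℝ (Fin N) => gaussM N (v - c)) :=
  intg_gaussM.comp_sub_right c

lemma integral_gaussM_sub : ∫ v : EuclideanSpace ℝ (Fin N), gaussM N (v - c) = 1 := by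
  rw [MeasureTheory.integral_sub_right_eq_self (gaussM N) c]
  exact integral_gaussM

lemma intg_coord_gaussM_sub (i : Fin N) :
    Integrable (fun v : EuclideanSpace ℝ (Fin N) => v i * gaussM N (v - c)) := by
  have hg : Integrable (fun w : EuclideanSpace ℝ (Fin N) => w i * gaussM N w + c i * gaussM N w) :=
    (intg_coord_gaussM i).add (intg_gaussM.const_mul _)
  have := hg.comp_sub_right c
  refine this.congr ?_
  filter_upwards with v
  have : (v - c) i = v i - c i := rfl
  simp only [this]; ring

lemma integral_coord_gaussM_sub (i : Fin N) :
    ∫ v : EuclideanSpace ℝ (Fin N), v i * gaussM N (v - c) = c i := by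
  have h := MeasureTheory.integral_add_right_eq_self (μ := volume)
    (fun v : EuclideanSpace ℝ (Fin N) => v i * gaussM N (v - c)) c
  have h2 : ∀ w : EuclideanSpace ℝ (Fin N),
      (w + c) i * gaussM N (w + c - c) = w i * gaussM N w + c i * gaussM N w := by
    intro w
    have h3 : (w + c) i = w i + c i := rfl
    rw [add_sub_cancel_right, h3]; ring
  rw [← h]
  simp_rw [h2]
  rw [MeasureTheory.integral_add (intg_coord_gaussM i) (intg_gaussM.const_mul _),
    integral_coord_gaussM, MeasureTheory.integral_const_mul, integral_gaussM]
  simp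

lemma integral_abs_coord_gaussM_sub_le (i : Fin N) :
    ∫ v : EuclideanSpace ℝ (Fin N), |v i * gaussM N (v - c)|
      ≤ (∫ w : EuclideanSpace ℝ (Fin N), ‖w‖ * gaussM N w) + ‖c‖ := by
  have hInt : Integrable (fun w : EuclideanSpace ℝ (Fin N) =>
      (‖w‖ + ‖c‖) * gaussM N w) := by
    have := (intg_norm_gaussM (N := N)).add (intg_gaussM.const_mul ‖c‖)
    refine this.congr ?_
    filter_upwards with w
    show ‖w‖ * gaussM N w + ‖c‖ * gaussM N w = _
    ring
  have hIntc := hInt.comp_sub_right c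
  have step1 : ∫ v : EuclideanSpace ℝ (Fin N), |v i * gaussM N (v - c)|
      ≤ ∫ v : EuclideanSpace ℝ (Fin N), (‖v - c‖ + ‖c‖) * gaussM N (v - c) := by
    refine integral_mono_of_nonneg ?_ hIntc ?_
    · filter_upwards with v; positivity
    · filter_upwards with v
      rw [abs_mul, abs_of_nonneg (a := gaussM N (v - c)) (by unfold gaussM; positivity)]
      refine mul_le_mul_of_nonneg_right ?_ (by unfold gaussM; positivity)
      calc |v i| ≤ ‖v‖ := coord_abs_le_norm v i
        _ ≤ ‖v - c‖ + ‖c‖ := by simpa using norm_add_le (v - c) c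
  refine step1.trans ?_
  rw [MeasureTheory.integral_sub_right_eq_self
    (fun w : EuclideanSpace ℝ (Fin N) => (‖w‖ + ‖c‖) * gaussM N w) c]
  have : ∀ w : EuclideanSpace ℝ (Fin N),
      (‖w‖ + ‖c‖) * gaussM N w = ‖w‖ * gaussM N w + ‖c‖ * gaussM N w := fun w => by ring
  simp_rw [this]
  rw [MeasureTheory.integral_add intg_norm_gaussM (intg_gaussM.const_mul _),
    MeasureTheory.integral_const_mul, integral_gaussM]
  simp

section Edep
variable {E : ℝ → EuclideanSpace ℝ (Fin N)} {t : ℝ}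

lemma hasDerivAt_A (hEc : Continuous E) (σ : ℝ) :
    HasDerivAt (fun u => ∫ r in u..t, E r) (-(E σ)) σ :=
  intervalIntegral.integral_hasDerivAt_left (hEc.intervalIntegrable σ t)
    hEc.stronglyMeasurable.stronglyMeasurableAtFilter hEc.continuousAt

lemma continuous_A (hEc : Continuous E) : Continuous (fun u => ∫ r in u..t, E r) :=
  continuous_iff_continuousAt.2 fun σ => (hasDerivAt_A hEc σ).continuousAt

lemma key_identity (hEc : Continuous E) (s : ℝ) (i : Fin N) :
    ∫ σ in s..t, Real.exp (σ - t) * (∫ r in σ..t, E r) i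
      = (∫ σ in s..t, Real.exp (σ - t) * E σ i)
        - Real.exp (s - t) * (∫ r in s..t, E r) i := by
  set A : ℝ → EuclideanSpace ℝ (Fin N) := fun u => ∫ r in u..t, E r with hA
  have hAc : Continuous A := continuous_A hEc
  have hAi : ∀ σ, HasDerivAt (fun u => A u i) (-(E σ i)) σ := by
    intro σ
    have h1 := (hasDerivAt_A hEc (t := t) σ)
    have := (EuclideanSpace.proj i : EuclideanSpace ℝ (Fin N) →L[ℝ] ℝ).hasFDerivAt.comp_hasDerivAt σ h1
    exact this
  have hAci : Continuous (fun u => A u i) :=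
    (EuclideanSpace.proj i : EuclideanSpace ℝ (Fin N) →L[ℝ] ℝ).continuous.comp hAc
  set φ : ℝ → ℝ := fun σ => Real.exp (σ - t) * A σ i with hφ
  have hφ' : ∀ σ, HasDerivAt φ
      (Real.exp (σ - t) * A σ i + Real.exp (σ - t) * (-(E σ i))) σ := by
    intro σ
    have he : HasDerivAt (fun u : ℝ => Real.exp (u - t)) (Real.exp (σ - t)) σ := by
      have := ((hasDerivAt_id σ).sub_const t).exp
      simpa using this
    exact he.mul (hAi σ)
  have hcont : Continuous (fun σ => Real.exp (σ - t) * A σ i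
      + Real.exp (σ - t) * (-(E σ i))) := by
    have hEi : Continuous (fun σ => E σ i) :=
      (EuclideanSpace.proj i : EuclideanSpace ℝ (Fin N) →L[ℝ] ℝ).continuous.comp hEc
    fun_prop
  have hftc := intervalIntegral.integral_eq_sub_of_hasDerivAt
    (f := φ) (a := s) (b := t)
    (fun σ _ => hφ' σ) (hcont.intervalIntegrable s t)
  have hsplit : ∫ σ in s..t, (Real.exp (σ - t) * A σ i + Real.exp (σ - t) * (-(E σ i)))
      = (∫ σ in s..t, Real.exp (σ - t) * A σ i)
        + ∫ σ in s..t, Real.exp (σ - t) * (-(E σ i)) := by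
    apply intervalIntegral.integral_add
    · exact (by fun_prop : Continuous fun σ => Real.exp (σ - t) * A σ i).intervalIntegrable s t
    · have hEi : Continuous (fun σ => E σ i) :=
        (EuclideanSpace.proj i : EuclideanSpace ℝ (Fin N) →L[ℝ] ℝ).continuous.comp hEc
      exact (by fun_prop : Continuous fun σ => Real.exp (σ - t) * (-(E σ i))).intervalIntegrable s t
  rw [hsplit] at hftc
  have hφt : φ t = 0 := by
    simp [hφ, hA, intervalIntegral.integral_same]
  have hneg : ∫ σ in s..t, Real.exp (σ - t) * (-(E σ i))
      = -∫ σ in s..t, Real.exp (σ - t) * E σ i := by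
    rw [← intervalIntegral.integral_neg]; congr 1; ext σ; ring
  rw [hφt, hneg] at hftc
  have : φ s = Real.exp (s - t) * A s i := rfl
  rw [this] at hftc
  linarith

end Edep


/-- Linear-Boltzmann moment formulas (Lemma 5.1, LB case): the Duhamel solution
`f_{s,t}` of the linear Boltzmann equation driven by `E` is integrable, mass is conserved,
and `J(f_{s,t}) = e^{-(t-s)} J(f) + ρ(f) ∫_s^t e^{-(t-σ)} E(σ) dσ`. -/
theorem LB_moments (N : ℕ) (hN : 1 ≤ N)
    (E : ℝ → EuclideanSpace ℝ (Fin N)) (hEc : Continuous E)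
    (R : ℝ) (hEb : ∀ r, ‖E r‖ ≤ R)
    (s t : ℝ) (hst : s ≤ t)
    (f : EuclideanSpace ℝ (Fin N) → ℝ) (hf : Integrable f)
    (hf1 : Integrable (fun v : EuclideanSpace ℝ (Fin N) => ‖v‖ * |f v|))
    (fst : EuclideanSpace ℝ (Fin N) → ℝ)
    (hfst : ∀ v, fst v
      = Real.exp (-(t - s)) * f (v - ∫ r in s..t, E r)
        + (∫ v' : EuclideanSpace ℝ (Fin N), f v')
          * ∫ σ in s..t, Real.exp (-(t - σ)) * gaussM N (v - ∫ r in σ..t, E r)) :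
    Integrable fst ∧
    ((∫ v : EuclideanSpace ℝ (Fin N), fst v) = ∫ v : EuclideanSpace ℝ (Fin N), f v) ∧
    (∀ i : Fin N, (∫ v : EuclideanSpace ℝ (Fin N), v i * fst v)
      = Real.exp (-(t - s)) * (∫ v : EuclideanSpace ℝ (Fin N), v i * f v)
        + (∫ v : EuclideanSpace ℝ (Fin N), f v)
          * ∫ σ in s..t, Real.exp (-(t - σ)) * E σ i) := by
  set a : EuclideanSpace ℝ (Fin N) := ∫ r in s..t, E r with ha
  set A : ℝ → EuclideanSpace ℝ (Fin N) := fun σ => ∫ r in σ..t, E r with hA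
  have hAc : Continuous A := continuous_A hEc
  set ρ : ℝ := ∫ v' : EuclideanSpace ℝ (Fin N), f v' with hρ
  set c₁ : ℝ := Real.exp (-(t - s)) with hc₁
  set ν : Measure ℝ := volume.restrict (Set.Ioc s t) with hν
  have hνfin : IsFiniteMeasure ν := by
    constructor
    rw [hν, Measure.restrict_apply_univ]
    exact measure_Ioc_lt_top
  have hgc : Continuous (gaussM N) := by unfold gaussM; fun_prop
  -- the kernel F
  set F : ℝ × EuclideanSpace ℝ (Fin N) → ℝ := fun p => Real.exp (-(t - p.1)) * gaussM N (p.2 - A p.1) with hF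
  have hFc : Continuous F := by
    apply Continuous.mul
    · fun_prop
    · exact hgc.comp (continuous_snd.sub (hAc.comp continuous_fst))
  have hFm : AEStronglyMeasurable F (ν.prod volume) := hFc.aestronglyMeasurable
  have hFnorm : ∀ σ, (∫ v : EuclideanSpace ℝ (Fin N), ‖F (σ, v)‖) = Real.exp (-(t - σ)) := by
    intro σ
    have : ∀ v : EuclideanSpace ℝ (Fin N), ‖F (σ, v)‖ = Real.exp (-(t - σ)) * gaussM N (v - A σ) := by
      intro v
      rw [Real.norm_eq_abs, abs_mul, abs_of_pos (Real.exp_pos _),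
        abs_of_nonneg (gaussM_nonneg _)]
    simp_rw [this]
    rw [MeasureTheory.integral_const_mul, integral_gaussM_sub]
    simp
  have hFint : Integrable F (ν.prod volume) := by
    refine (integrable_prod_iff hFm).2 ⟨?_, ?_⟩
    · filter_upwards with σ
      simp only [hF]
      exact (intg_gaussM_sub (A σ)).const_mul (Real.exp (-(t - σ)))
    · have heq : (fun σ => ∫ v : EuclideanSpace ℝ (Fin N), ‖F (σ, v)‖) = fun σ => Real.exp (-(t - σ)) :=
        funext hFnorm
      rw [heq, hν]
      exact (Continuous.integrableOn_Ioc (by fun_prop))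
  have hGint : Integrable (fun v : EuclideanSpace ℝ (Fin N) => ∫ σ, F (σ, v) ∂ν) volume :=
    hFint.integral_prod_right
  -- rewrite fst
  have hfst' : ∀ v : EuclideanSpace ℝ (Fin N), fst v = c₁ * f (v - a) + ρ * ∫ σ, F (σ, v) ∂ν := by
    intro v
    rw [hfst v]
    congr 1
    rw [intervalIntegral.integral_of_le hst]
  have hfeq : fst = fun v : EuclideanSpace ℝ (Fin N) => c₁ * f (v - a) + ρ * ∫ σ, F (σ, v) ∂ν := funext hfst'
  have hf_sub : Integrable (fun v : EuclideanSpace ℝ (Fin N) => f (v - a)) := hf.comp_sub_right a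
  have hIfst : Integrable fst := by
    rw [hfeq]
    exact (hf_sub.const_mul _).add (hGint.const_mul _)
  -- mass
  have hswap : ∫ v : EuclideanSpace ℝ (Fin N), (∫ σ, F (σ, v) ∂ν) = ∫ σ, (∫ v : EuclideanSpace ℝ (Fin N), F (σ, v)) ∂ν :=
    (MeasureTheory.integral_integral_swap (f := fun σ (v : EuclideanSpace ℝ (Fin N)) => F (σ, v)) hFint).symm
  have hinner : ∀ σ, (∫ v : EuclideanSpace ℝ (Fin N), F (σ, v)) = Real.exp (-(t - σ)) := by
    intro σ
    show (∫ v : EuclideanSpace ℝ (Fin N), Real.exp (-(t - σ)) * gaussM N (v - A σ)) = _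
    rw [MeasureTheory.integral_const_mul, integral_gaussM_sub]
    simp
  have hexp_int : ∫ σ, Real.exp (-(t - σ)) ∂ν = 1 - Real.exp (s - t) := by
    rw [hν, ← intervalIntegral.integral_of_le hst]
    have : ∀ σ, Real.exp (-(t - σ)) = Real.exp (σ - t) := fun σ => by ring_nf
    simp_rw [this]
    rw [intervalIntegral.integral_comp_sub_right (fun x => Real.exp x) t]
    rw [integral_exp]
    simp
  have hmass : (∫ v : EuclideanSpace ℝ (Fin N), fst v) = ρ := by
    rw [hfeq]
    rw [MeasureTheory.integral_add (hf_sub.const_mul _) (hGint.const_mul _)]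
    rw [MeasureTheory.integral_const_mul, MeasureTheory.integral_const_mul,
      MeasureTheory.integral_sub_right_eq_self f a]
    rw [hswap]
    simp_rw [hinner]
    rw [hexp_int]
    rw [hc₁, show (-(t - s) : ℝ) = s - t by ring]
    ring
  refine ⟨hIfst, hmass, ?_⟩
  -- first moment
  intro i
  set F1 : ℝ × EuclideanSpace ℝ (Fin N) → ℝ := fun p => Real.exp (-(t - p.1)) * (p.2 i * gaussM N (p.2 - A p.1))
    with hF1
  have hcoord : Continuous (fun v : EuclideanSpace ℝ (Fin N) => v i) :=
    (EuclideanSpace.proj i : EuclideanSpace ℝ (Fin N) →L[ℝ] ℝ).continuous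
  have hF1c : Continuous F1 := by
    apply Continuous.mul
    · fun_prop
    · exact (hcoord.comp continuous_snd).mul
        (hgc.comp (continuous_snd.sub (hAc.comp continuous_fst)))
  have hF1m : AEStronglyMeasurable F1 (ν.prod volume) := hF1c.aestronglyMeasurable
  have hR0 : 0 ≤ R := le_trans (norm_nonneg (E 0)) (hEb 0)
  have hAbd : ∀ σ ∈ Set.Ioc s t, ‖A σ‖ ≤ R * (t - s) := by
    intro σ hσ
    have h1 : ‖A σ‖ ≤ R * |t - σ| := by
      apply intervalIntegral.norm_integral_le_of_norm_le_const
      intro x _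
      exact hEb x
    refine h1.trans ?_
    have : |t - σ| ≤ t - s := by
      rw [abs_of_nonneg (by linarith [hσ.2])]
      linarith [hσ.1]
    exact mul_le_mul_of_nonneg_left this hR0
  set M₁ : ℝ := ∫ w : EuclideanSpace ℝ (Fin N), ‖w‖ * gaussM N w with hM₁
  have hM₁0 : 0 ≤ M₁ := integral_nonneg fun w => by
    have := gaussM_nonneg (N := N) w
    positivity
  have hF1int : Integrable F1 (ν.prod volume) := by
    refine (integrable_prod_iff hF1m).2 ⟨?_, ?_⟩
    · filter_upwards with σ
      simp only [hF1]
      exact (intg_coord_gaussM_sub (A σ) i).const_mul _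
    · refine Integrable.mono' (integrable_const (M₁ + R * (t - s)))
        (hF1m.norm.integral_prod_right') ?_
      rw [hν]
      filter_upwards [ae_restrict_mem measurableSet_Ioc] with σ hσ
      have hnn : 0 ≤ ∫ v : EuclideanSpace ℝ (Fin N), ‖F1 (σ, v)‖ := integral_nonneg fun v => norm_nonneg _
      rw [Real.norm_eq_abs, abs_of_nonneg hnn]
      have hval : ∀ v : EuclideanSpace ℝ (Fin N), ‖F1 (σ, v)‖
          = Real.exp (-(t - σ)) * |v i * gaussM N (v - A σ)| := by
        intro v
        rw [Real.norm_eq_abs, abs_mul, abs_of_pos (Real.exp_pos _)]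
      calc (∫ v : EuclideanSpace ℝ (Fin N), ‖F1 (σ, v)‖)
          = Real.exp (-(t - σ)) * ∫ v : EuclideanSpace ℝ (Fin N), |v i * gaussM N (v - A σ)| := by
            simp_rw [hval]; rw [MeasureTheory.integral_const_mul]
        _ ≤ 1 * (M₁ + ‖A σ‖) := by
            apply mul_le_mul
            · rw [Real.exp_le_one_iff]; linarith [hσ.2]
            · exact integral_abs_coord_gaussM_sub_le (A σ) i
            · exact integral_nonneg fun v => abs_nonneg _
            · norm_num
        _ ≤ M₁ + R * (t - s) := by
            rw [one_mul]
            have := hAbd σ hσ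
            linarith
  have hG1int : Integrable (fun v : EuclideanSpace ℝ (Fin N) => ∫ σ, F1 (σ, v) ∂ν) volume :=
    hF1int.integral_prod_right
  -- integrable coordinate-weighted pieces
  have hfi1 : Integrable (fun w : EuclideanSpace ℝ (Fin N) => w i * f w) := by
    refine hf1.mono' ((hcoord.aestronglyMeasurable).mul hf.1) ?_
    filter_upwards with w
    rw [Real.norm_eq_abs, abs_mul]
    exact mul_le_mul_of_nonneg_right (coord_abs_le_norm w i) (abs_nonneg _)
  have hg2 : Integrable (fun w : EuclideanSpace ℝ (Fin N) => w i * f w + a i * f w) :=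
    hfi1.add (hf.const_mul _)
  have hfi_sub : Integrable (fun v : EuclideanSpace ℝ (Fin N) => v i * f (v - a)) := by
    refine (hg2.comp_sub_right a).congr ?_
    filter_upwards with v
    show (v - a) i * f (v - a) + a i * f (v - a) = _
    have : (v - a) i = v i - a i := rfl
    rw [this]; ring
  have hint_fi_sub : (∫ v : EuclideanSpace ℝ (Fin N), v i * f (v - a))
      = (∫ w : EuclideanSpace ℝ (Fin N), w i * f w) + a i * ρ := by
    have h := MeasureTheory.integral_sub_right_eq_self (μ := volume)
      (fun w : EuclideanSpace ℝ (Fin N) => w i * f w + a i * f w) a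
    have h2 : ∀ v : EuclideanSpace ℝ (Fin N), (fun w : EuclideanSpace ℝ (Fin N) => w i * f w + a i * f w) (v - a)
        = v i * f (v - a) := by
      intro v
      show (v - a) i * f (v - a) + a i * f (v - a) = _
      have : (v - a) i = v i - a i := rfl
      rw [this]; ring
    simp_rw [h2] at h
    rw [h]
    rw [MeasureTheory.integral_add hfi1 (hf.const_mul _),
      MeasureTheory.integral_const_mul]
  -- rewrite v i * fst v
  have hmom_eq : (fun v : EuclideanSpace ℝ (Fin N) => v i * fst v)
      = fun v : EuclideanSpace ℝ (Fin N) => c₁ * (v i * f (v - a)) + ρ * ∫ σ, F1 (σ, v) ∂ν := by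
    funext v
    rw [hfst' v]
    have hpull : v i * (∫ σ, F (σ, v) ∂ν) = ∫ σ, F1 (σ, v) ∂ν := by
      rw [← MeasureTheory.integral_const_mul]
      congr 1
      funext σ
      show v i * (Real.exp (-(t - σ)) * gaussM N (v - A σ)) = _
      show _ = Real.exp (-(t - σ)) * (v i * gaussM N (v - A σ))
      ring
    rw [mul_add]
    rw [show v i * (ρ * ∫ σ, F (σ, v) ∂ν) = ρ * (v i * ∫ σ, F (σ, v) ∂ν) by ring, hpull]
    ring
  have hswap1 : ∫ v : EuclideanSpace ℝ (Fin N), (∫ σ, F1 (σ, v) ∂ν) = ∫ σ, (∫ v : EuclideanSpace ℝ (Fin N), F1 (σ, v)) ∂ν :=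
    (MeasureTheory.integral_integral_swap (f := fun σ (v : EuclideanSpace ℝ (Fin N)) => F1 (σ, v)) hF1int).symm
  have hinner1 : ∀ σ, (∫ v : EuclideanSpace ℝ (Fin N), F1 (σ, v)) = Real.exp (-(t - σ)) * A σ i := by
    intro σ
    show (∫ v : EuclideanSpace ℝ (Fin N), Real.exp (-(t - σ)) * (v i * gaussM N (v - A σ))) = _
    rw [MeasureTheory.integral_const_mul, integral_coord_gaussM_sub]
  have hkey := key_identity hEc (t := t) s i
  have houter1 : ∫ σ, (∫ v : EuclideanSpace ℝ (Fin N), F1 (σ, v)) ∂ν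
      = (∫ σ in s..t, Real.exp (-(t - σ)) * E σ i) - Real.exp (s - t) * a i := by
    simp_rw [hinner1]
    rw [hν, ← intervalIntegral.integral_of_le hst]
    have hσt : ∀ σ, Real.exp (-(t - σ)) = Real.exp (σ - t) := fun σ => by ring_nf
    simp_rw [hσt]
    rw [hkey]
  -- final computation
  rw [hmom_eq]
  rw [MeasureTheory.integral_add ((hfi_sub).const_mul _) (hG1int.const_mul _)]
  rw [MeasureTheory.integral_const_mul, MeasureTheory.integral_const_mul]
  rw [hint_fi_sub, hswap1, houter1]
  rw [hc₁, show (-(t - s) : ℝ) = s - t by ring]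
  ring
end

section
/- Resolvent–covariance identity for stationary processes (Lemma 5.3): let (Ω, P) be a probability space, R ≥ 0, and let Ē : ℝ × Ω → ℝ^N be jointly measurable with |Ē(t, ω)| ≤ R for all t, ω. Assume wide-sense stationarity: there is a function Γ : ℝ → Matrix(N, N, ℝ) with E[Ē_i(s) Ē_j(σ)] = Γ_{ij}(s − σ) for all s, σ ∈ ℝ and all i, j. Then for every δ > 0, the random vector Y = ∫_{−∞}^0 e^{δσ} Ē(σ) dσ satisfies 2δ E[Y_i Y_j] = ∫_0^∞ e^{−δt} ( Γ_{ij}(t) + Γ_{ij}(−t) ) dt for all i, j; in particular the matrix ∫_0^∞ e^{−δt} ( Γ(t) + Γ(−t) ) dt is symmetric and positive semidefinite. -/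
open MeasureTheory
open Set Real Filter

lemma abs_coord_le {N : ℕ} (x : EuclideanSpace ℝ (Fin N)) (i : Fin N) : |x i| ≤ ‖x‖ := by
  rw [EuclideanSpace.norm_eq, ← Real.sqrt_sq_eq_abs]
  apply Real.sqrt_le_sqrt
  have := Finset.single_le_sum (f := fun k => ‖x k‖ ^ 2) (fun k _ => sq_nonneg _)
    (Finset.mem_univ i)
  simpa [Real.norm_eq_abs, sq_abs] using this

lemma integrable_exp_neg_abs {c : ℝ} (hc : 0 < c) :
    Integrable (fun t : ℝ => Real.exp (-(c * |t|))) := by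
  rw [← integrableOn_univ, ← Set.Iic_union_Ioi (a := (0:ℝ))]
  refine IntegrableOn.union ?_ ?_
  · refine (integrableOn_exp_mul_Iic hc 0).congr_fun ?_ measurableSet_Iic
    intro t ht
    simp only [Set.mem_Iic] at ht
    simp only []
    rw [abs_of_nonpos ht, mul_neg, neg_neg]
  · refine (exp_neg_integrableOn_Ioi 0 hc).congr_fun ?_ measurableSet_Ioi
    intro t ht
    simp only [Set.mem_Ioi] at ht
    simp only []
    rw [abs_of_pos ht, neg_mul]

lemma det_calc {δ : ℝ} (hδ : 0 < δ) (G : ℝ → ℝ) (hGm : Measurable G)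
    (C : ℝ) (hGb : ∀ t, |G t| ≤ C) :
    2 * δ * (∫ p : ℝ × ℝ, Real.exp (δ * p.1) * Real.exp (δ * p.2) * G (p.1 - p.2)
      ∂((volume.restrict (Set.Iic 0)).prod (volume.restrict (Set.Iic 0))))
    = ∫ t in Set.Ioi (0:ℝ), Real.exp (-(δ * t)) * (G t + G (-t)) := by
  have hC : 0 ≤ C := le_trans (abs_nonneg _) (hGb 0)
  set μ : Measure ℝ := volume.restrict (Set.Iic (0:ℝ)) with hμ
  set f : ℝ × ℝ → ℝ := fun p => Real.exp (δ * p.1) * Real.exp (δ * p.2) * G (p.1 - p.2)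
    with hf
  have hfm : Measurable f :=
    ((Real.measurable_exp.comp (measurable_fst.const_mul δ)).mul
      (Real.measurable_exp.comp (measurable_snd.const_mul δ))).mul
      (hGm.comp (measurable_fst.sub measurable_snd))
  have hexpInt : Integrable (fun s => Real.exp (δ * s)) μ := integrableOn_exp_mul_Iic hδ 0
  have hfInt : Integrable f (μ.prod μ) := by
    refine Integrable.mono' ((hexpInt.mul_prod hexpInt).mul_const C)
      hfm.aestronglyMeasurable (Eventually.of_forall fun p => ?_)
    have e12 : (0:ℝ) ≤ Real.exp (δ * p.1) * Real.exp (δ * p.2) :=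
      mul_nonneg (Real.exp_pos _).le (Real.exp_pos _).le
    rw [Real.norm_eq_abs, hf, abs_mul, abs_of_nonneg e12]
    exact mul_le_mul_of_nonneg_left (hGb _) e12
  -- iterate
  have hiter : (∫ p, f p ∂(μ.prod μ)) = ∫ σ, (∫ s, f (s, σ) ∂μ) ∂μ :=
    integral_prod_symm f hfInt
  -- translate the inner integral
  have key : ∀ σ : ℝ, (∫ s, f (s, σ) ∂μ)
      = ∫ t, Set.indicator (Set.Iic (-σ))
          (fun t => Real.exp (δ * (t + σ)) * Real.exp (δ * σ) * G t) t := by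
    intro σ
    rw [hμ, ← integral_indicator measurableSet_Iic]
    rw [← MeasureTheory.integral_add_right_eq_self
      (fun s => Set.indicator (Set.Iic (0:ℝ)) (fun s => f (s, σ)) s) σ]
    congr 1
    funext t
    simp only [Set.indicator_apply, Set.mem_Iic, hf]
    by_cases h : t + σ ≤ 0
    · rw [if_pos h, if_pos (by linarith : t ≤ -σ), add_sub_cancel_right]
    · rw [if_neg h, if_neg (by intro h2; exact h (by linarith))]
  -- the two-variable function after translation
  set F : ℝ → ℝ → ℝ := fun σ t => Set.indicator (Set.Iic (0:ℝ))
      (fun σ => Set.indicator (Set.Iic (-σ))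
        (fun t => Real.exp (δ * (t + σ)) * Real.exp (δ * σ) * G t) t) σ with hF
  have houter : (∫ σ, (∫ s, f (s, σ) ∂μ) ∂μ) = ∫ σ, ∫ t, F σ t := by
    simp_rw [key]
    rw [hμ, ← integral_indicator measurableSet_Iic]
    congr 1
    funext σ
    simp only [hF, Set.indicator_apply, Set.mem_Iic]
    by_cases h : σ ≤ 0
    · simp only [h, if_true]
    · simp only [h, if_false, integral_zero]
  -- measurability of uncurry F
  have hFm : Measurable (Function.uncurry F) := by
    have : Function.uncurry F = Set.indicator {p : ℝ × ℝ | p.1 ≤ 0 ∧ p.1 + p.2 ≤ 0}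
        (fun p => Real.exp (δ * (p.2 + p.1)) * Real.exp (δ * p.1) * G p.2) := by
      funext p
      simp only [Function.uncurry, hF, Set.indicator_apply, Set.mem_Iic, Set.mem_setOf_eq]
      by_cases h1 : p.1 ≤ 0
      · by_cases h2 : p.2 ≤ -p.1
        · rw [if_pos h1, if_pos h2, if_pos ⟨h1, by linarith⟩]
        · rw [if_pos h1, if_neg h2, if_neg (by rintro ⟨-, h3⟩; exact h2 (by linarith))]
      · rw [if_neg h1, if_neg (by rintro ⟨h3, -⟩; exact h1 h3)]
    rw [this]
    refine Measurable.indicator ?_ ?_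
    · exact ((Real.measurable_exp.comp ((measurable_snd.add measurable_fst).const_mul δ)).mul
        (Real.measurable_exp.comp (measurable_fst.const_mul δ))).mul
        (hGm.comp measurable_snd)
    · exact MeasurableSet.inter (measurableSet_le measurable_fst measurable_const)
        (measurableSet_le (measurable_fst.add measurable_snd) measurable_const)
  -- integrability of uncurry F
  have hFInt : Integrable (Function.uncurry F) ((volume : Measure ℝ).prod volume) := by
    have hb1 : Integrable (fun σ : ℝ => Set.indicator (Set.Iic (0:ℝ))
        (fun σ => C * Real.exp ((δ/2) * σ)) σ) := by
      have hint : IntegrableOn (fun σ : ℝ => C * Real.exp ((δ/2) * σ)) (Set.Iic 0) volume :=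
        (integrableOn_exp_mul_Iic (half_pos hδ) 0).const_mul C
      exact hint.integrable_indicator measurableSet_Iic
    have hb2 : Integrable (fun t : ℝ => Real.exp (-((δ/2) * |t|))) :=
      integrable_exp_neg_abs (half_pos hδ)
    refine Integrable.mono' (hb1.mul_prod hb2) hFm.aestronglyMeasurable
      (Eventually.of_forall fun p => ?_)
    obtain ⟨σ, t⟩ := p
    simp only [Function.uncurry, hF, Set.indicator_apply, Set.mem_Iic]
    by_cases h1 : σ ≤ 0
    · by_cases h2 : t ≤ -σ
      · rw [if_pos h1, if_pos h2, if_pos h1]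
        rw [Real.norm_eq_abs, abs_mul, abs_mul, abs_of_nonneg (Real.exp_pos _).le,
          abs_of_nonneg (Real.exp_pos _).le]
        have hexp : Real.exp (δ * (t + σ)) * Real.exp (δ * σ)
            ≤ Real.exp ((δ/2) * σ) * Real.exp (-((δ/2) * |t|)) := by
          rw [← Real.exp_add, ← Real.exp_add]
          apply Real.exp_le_exp.2
          rcases le_total t 0 with ht | ht
          · rw [abs_of_nonpos ht]; nlinarith
          · rw [abs_of_nonneg ht]; nlinarith
        calc Real.exp (δ * (t + σ)) * Real.exp (δ * σ) * |G t|
            ≤ Real.exp (δ * (t + σ)) * Real.exp (δ * σ) * C :=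
              mul_le_mul_of_nonneg_left (hGb t)
                (mul_nonneg (Real.exp_pos _).le (Real.exp_pos _).le)
          _ ≤ Real.exp ((δ/2) * σ) * Real.exp (-((δ/2) * |t|)) * C :=
              mul_le_mul_of_nonneg_right hexp hC
          _ = C * Real.exp ((δ/2) * σ) * Real.exp (-((δ/2) * |t|)) := by ring
      · rw [if_pos h1, if_neg h2, if_pos h1, norm_zero]
        positivity
    · rw [if_neg h1, if_neg h1, norm_zero, zero_mul]
  -- swap
  have hswap : (∫ σ, ∫ t, F σ t) = ∫ t, ∫ σ, F σ t :=
    integral_integral_swap hFInt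
  -- inner sigma integral
  have habs : ∀ t : ℝ, Real.exp (δ * t) * Real.exp (2 * δ * min 0 (-t))
      = Real.exp (-(δ * |t|)) := by
    intro t
    rw [← Real.exp_add]
    congr 1
    rcases le_total 0 t with h | h
    · rw [min_eq_right (by linarith), abs_of_nonneg h]; ring
    · rw [min_eq_left (by linarith), abs_of_nonpos h]; ring
  have hinner : ∀ t : ℝ, (∫ σ, F σ t) = (2 * δ)⁻¹ * (Real.exp (-(δ * |t|)) * G t) := by
    intro t
    have hFt : ∀ σ, F σ t = Set.indicator (Set.Iic (min 0 (-t)))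
        (fun σ => Real.exp (δ * t) * G t * Real.exp (2 * δ * σ)) σ := by
      intro σ
      simp only [hF, Set.indicator_apply, Set.mem_Iic, le_min_iff]
      by_cases h1 : σ ≤ 0
      · by_cases h2 : t ≤ -σ
        · rw [if_pos h1, if_pos h2, if_pos ⟨h1, by linarith⟩]
          have hee : Real.exp (δ * (t + σ)) * Real.exp (δ * σ)
              = Real.exp (δ * t) * Real.exp (2 * δ * σ) := by
            rw [← Real.exp_add, ← Real.exp_add]; ring_nf
          rw [hee]; ring
        · rw [if_pos h1, if_neg h2, if_neg (by rintro ⟨-, h3⟩; exact h2 (by linarith))]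
      · rw [if_neg h1, if_neg (by rintro ⟨h3, -⟩; exact h1 h3)]
    simp_rw [hFt]
    rw [integral_indicator measurableSet_Iic, MeasureTheory.integral_const_mul,
      integral_exp_mul_Iic (by positivity) (min 0 (-t)), ← habs t]
    ring
  simp_rw [hiter, houter, hswap, hinner]
  rw [MeasureTheory.integral_const_mul, ← mul_assoc, mul_inv_cancel₀ (by positivity : (2*δ) ≠ 0), one_mul]
  -- split the abs integral
  have hBm : Measurable (fun t : ℝ => Real.exp (-(δ * |t|)) * G t) :=
    (Real.measurable_exp.comp ((measurable_abs.const_mul δ).neg)).mul hGm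
  have hBInt : Integrable (fun t : ℝ => Real.exp (-(δ * |t|)) * G t) := by
    refine Integrable.mono' ((integrable_exp_neg_abs hδ).mul_const C)
      hBm.aestronglyMeasurable (Eventually.of_forall fun t => ?_)
    rw [Real.norm_eq_abs, abs_mul, abs_of_nonneg (Real.exp_pos _).le]
    exact mul_le_mul_of_nonneg_left (hGb t) (Real.exp_pos _).le
  rw [← intervalIntegral.integral_Iic_add_Ioi (b := (0:ℝ)) hBInt.integrableOn hBInt.integrableOn]
  have hIic : (∫ t in Set.Iic (0:ℝ), Real.exp (-(δ * |t|)) * G t)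
      = ∫ t in Set.Ioi (0:ℝ), Real.exp (-(δ * t)) * G (-t) := by
    have h1 : (∫ t in Set.Iic (0:ℝ), Real.exp (-(δ * |t|)) * G t)
        = ∫ t in Set.Iic (0:ℝ), Real.exp (δ * t) * G t := by
      refine setIntegral_congr_fun measurableSet_Iic fun t ht => ?_
      simp only [Set.mem_Iic] at ht
      rw [abs_of_nonpos ht, mul_neg, neg_neg]
    have h2 := integral_comp_neg_Ioi (0:ℝ) (fun t => Real.exp (δ * t) * G t)
    rw [neg_zero] at h2
    rw [h1, ← h2]
    refine setIntegral_congr_fun measurableSet_Ioi fun t ht => ?_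
    rw [mul_neg]
  have hIoi : (∫ t in Set.Ioi (0:ℝ), Real.exp (-(δ * |t|)) * G t)
      = ∫ t in Set.Ioi (0:ℝ), Real.exp (-(δ * t)) * G t := by
    refine setIntegral_congr_fun measurableSet_Ioi fun t ht => ?_
    simp only [Set.mem_Ioi] at ht
    rw [abs_of_pos ht]
  rw [hIic, hIoi]
  have hintIoi : ∀ g : ℝ → ℝ, Measurable g → (∀ t, |g t| ≤ C) →
      IntegrableOn (fun t => Real.exp (-(δ * t)) * g t) (Set.Ioi (0:ℝ)) := by
    intro g hgm hgb
    refine Integrable.mono' (((exp_neg_integrableOn_Ioi 0 hδ)).mul_const C)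
      ((Real.measurable_exp.comp (measurable_id.const_mul δ).neg).mul
        hgm).aestronglyMeasurable (Eventually.of_forall fun t => ?_)
    rw [Real.norm_eq_abs, abs_mul, abs_of_nonneg (Real.exp_pos _).le]
    simp only [neg_mul]
    exact mul_le_mul_of_nonneg_left (hgb t) (Real.exp_pos _).le
  have hI1 : IntegrableOn (fun t => Real.exp (-(δ * t)) * G t) (Set.Ioi (0:ℝ)) :=
    hintIoi G hGm hGb
  have hI2 : IntegrableOn (fun t => Real.exp (-(δ * t)) * G (-t)) (Set.Ioi (0:ℝ)) :=
    hintIoi (fun t => G (-t)) (hGm.comp measurable_neg) (fun t => hGb (-t))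
  have hsplit : (∫ t in Set.Ioi (0:ℝ), Real.exp (-(δ * t)) * (G t + G (-t)))
      = (∫ t in Set.Ioi (0:ℝ), Real.exp (-(δ * t)) * G t)
        + ∫ t in Set.Ioi (0:ℝ), Real.exp (-(δ * t)) * G (-t) := by
    rw [← integral_add hI1 hI2]
    congr 1
    funext t
    ring
  rw [hsplit]
  exact add_comm _ _

/-- Resolvent–covariance identity for stationary processes (Lemma 5.3): if `Ē` is a bounded,
jointly measurable, wide-sense stationary `ℝ^N`-valued process with covariance `Γ`, then for
`δ > 0` the random vector `Y = ∫_{-∞}^0 e^{δσ} Ē(σ) dσ` satisfies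
`2δ E[Y_i Y_j] = ∫_0^∞ e^{-δt} (Γ_{ij}(t) + Γ_{ij}(-t)) dt`; in particular this matrix is
symmetric and positive semidefinite. -/
theorem resolvent_covariance {Ω : Type*} [MeasurableSpace Ω]
    (P : Measure Ω) [IsProbabilityMeasure P]
    (N : ℕ) (R : ℝ) (hR : 0 ≤ R)
    (Ebar : ℝ → Ω → EuclideanSpace ℝ (Fin N))
    (hEm : Measurable fun p : ℝ × Ω => Ebar p.1 p.2)
    (hEb : ∀ t ω, ‖Ebar t ω‖ ≤ R)
    (Γ : ℝ → Matrix (Fin N) (Fin N) ℝ)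
    (hΓ : ∀ s σ : ℝ, ∀ i j : Fin N,
      (∫ ω, Ebar s ω i * Ebar σ ω j ∂P) = Γ (s - σ) i j)
    (δ : ℝ) (hδ : 0 < δ)
    (Y : Ω → EuclideanSpace ℝ (Fin N))
    (hY : ∀ ω, Y ω = ∫ σ in Set.Iic (0:ℝ), Real.exp (δ * σ) • Ebar σ ω) :
    (∀ i j : Fin N, 2 * δ * (∫ ω, Y ω i * Y ω j ∂P)
      = ∫ t in Set.Ioi (0:ℝ), Real.exp (-(δ * t)) * (Γ t i j + Γ (-t) i j)) ∧
    (Matrix.of fun i j : Fin N =>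
      ∫ t in Set.Ioi (0:ℝ), Real.exp (-(δ * t)) * (Γ t i j + Γ (-t) i j)).IsSymm ∧
    (Matrix.of fun i j : Fin N =>
      ∫ t in Set.Ioi (0:ℝ), Real.exp (-(δ * t)) * (Γ t i j + Γ (-t) i j)).PosSemidef := by
  have hR2 : ∀ t ω (i : Fin N), |Ebar t ω i| ≤ R :=
    fun t ω i => (abs_coord_le _ i).trans (hEb t ω)
  set μ : Measure ℝ := volume.restrict (Set.Iic (0:ℝ)) with hμ
  have hEmi : ∀ i : Fin N, Measurable fun p : ℝ × Ω => Ebar p.1 p.2 i := fun i =>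
    ((EuclideanSpace.proj (𝕜 := ℝ) i).continuous.measurable).comp hEm
  have hEmω : ∀ ω, Measurable fun s => Ebar s ω :=
    fun ω => hEm.comp (measurable_id.prodMk measurable_const)
  have hexpm : Measurable fun σ : ℝ => Real.exp (δ * σ) :=
    Real.measurable_exp.comp (measurable_id.const_mul δ)
  have hYint : ∀ ω, Integrable (fun σ => Real.exp (δ * σ) • Ebar σ ω) μ := by
    intro ω
    refine Integrable.mono' ((integrableOn_exp_mul_Iic hδ 0).mul_const R)
      (hexpm.smul (hEmω ω)).aestronglyMeasurable (Eventually.of_forall fun σ => ?_)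
    rw [norm_smul, Real.norm_eq_abs, abs_of_nonneg (Real.exp_pos _).le]
    exact mul_le_mul_of_nonneg_left (hEb σ ω) (Real.exp_pos _).le
  have hYi : ∀ ω (i : Fin N), Y ω i = ∫ σ, Real.exp (δ * σ) * Ebar σ ω i ∂μ := by
    intro ω i
    have h := (EuclideanSpace.proj (𝕜 := ℝ) i).integral_comp_comm (hYint ω)
    rw [hY ω]
    have h2 : (EuclideanSpace.proj (𝕜 := ℝ) i)
        (∫ σ, Real.exp (δ * σ) • Ebar σ ω ∂μ)
        = (∫ σ, Real.exp (δ * σ) • Ebar σ ω ∂μ) i := rfl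
    rw [← h2, ← h]
    congr 1
  have hYsm : ∀ i : Fin N, StronglyMeasurable fun ω => Y ω i := by
    intro i
    have hsm : StronglyMeasurable (Function.uncurry fun (ω : Ω) (σ : ℝ) =>
        Real.exp (δ * σ) * Ebar σ ω i) := by
      apply Measurable.stronglyMeasurable
      exact (Real.measurable_exp.comp (measurable_snd.const_mul δ)).mul
        ((hEmi i).comp (measurable_snd.prodMk measurable_fst))
    have := hsm.integral_prod_right (ν := μ)
    have heq : (fun ω => Y ω i) = fun ω => ∫ σ, Real.exp (δ * σ) * Ebar σ ω i ∂μ :=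
      funext fun ω => hYi ω i
    rw [heq]
    exact this
  have hYb : ∀ ω (i : Fin N), |Y ω i| ≤ R / δ := by
    intro ω i
    rw [hYi ω i]
    have hb : ∀ σ : ℝ, ‖Real.exp (δ * σ) * Ebar σ ω i‖ ≤ Real.exp (δ * σ) * R := by
      intro σ
      rw [Real.norm_eq_abs, abs_mul, abs_of_nonneg (Real.exp_pos _).le]
      exact mul_le_mul_of_nonneg_left (hR2 σ ω i) (Real.exp_pos _).le
    have := norm_integral_le_of_norm_le ((integrableOn_exp_mul_Iic hδ 0).mul_const R)
      (Eventually.of_forall hb)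
    rw [Real.norm_eq_abs] at this
    refine this.trans ?_
    rw [MeasureTheory.integral_mul_const, integral_exp_mul_Iic hδ 0]
    rw [mul_zero, Real.exp_zero]
    rw [div_mul_eq_mul_div, one_mul]
  have hYij : ∀ i j : Fin N, Integrable (fun ω => Y ω i * Y ω j) P := by
    intro i j
    refine Integrable.mono' (integrable_const ((R/δ) * (R/δ)))
      (((hYsm i).mul (hYsm j)).aestronglyMeasurable) (Eventually.of_forall fun ω => ?_)
    rw [Real.norm_eq_abs, abs_mul]
    exact mul_le_mul (hYb ω i) (hYb ω j) (abs_nonneg _) (div_nonneg hR hδ.le)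
  have hΓval : ∀ (t : ℝ) (i j : Fin N), Γ t i j = ∫ ω, Ebar t ω i * Ebar 0 ω j ∂P := by
    intro t i j
    have := hΓ t 0 i j
    rw [sub_zero] at this
    exact this.symm
  have hΓm : ∀ i j : Fin N, Measurable fun t => Γ t i j := by
    intro i j
    have hsm : StronglyMeasurable fun q : ℝ × Ω => Ebar q.1 q.2 i * Ebar 0 q.2 j :=
      ((hEmi i).mul ((hEmi j).comp (measurable_const.prodMk
        measurable_snd))).stronglyMeasurable
    have h2 := hsm.integral_prod_right' (ν := P)
    have heq : (fun t => Γ t i j) = fun t => ∫ ω, Ebar t ω i * Ebar 0 ω j ∂P :=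
      funext fun t => hΓval t i j
    rw [heq]
    exact h2.measurable
  have hΓb : ∀ (i j : Fin N) (t : ℝ), |Γ t i j| ≤ R * R := by
    intro i j t
    rw [hΓval]
    have := norm_integral_le_of_norm_le_const (μ := P)
      (f := fun ω => Ebar t ω i * Ebar 0 ω j) (C := R * R)
      (Eventually.of_forall fun ω => by
        rw [Real.norm_eq_abs, abs_mul]
        exact mul_le_mul (hR2 t ω i) (hR2 0 ω j) (abs_nonneg _) hR)
    rw [Real.norm_eq_abs] at this
    simpa [measure_univ] using this
  -- main identity
  have main : ∀ i j : Fin N, (∫ ω, Y ω i * Y ω j ∂P)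
      = ∫ p : ℝ × ℝ, Real.exp (δ * p.1) * Real.exp (δ * p.2) * Γ (p.1 - p.2) i j
        ∂(μ.prod μ) := by
    intro i j
    set g : Ω → ℝ × ℝ → ℝ := fun ω p =>
      (Real.exp (δ * p.1) * Ebar p.1 ω i) * (Real.exp (δ * p.2) * Ebar p.2 ω j) with hg
    have hgm : Measurable (Function.uncurry g) := by
      apply Measurable.mul
      · exact (Real.measurable_exp.comp ((measurable_snd.fst).const_mul δ)).mul
          ((hEmi i).comp ((measurable_snd.fst).prodMk measurable_fst))
      · exact (Real.measurable_exp.comp ((measurable_snd.snd).const_mul δ)).mul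
          ((hEmi j).comp ((measurable_snd.snd).prodMk measurable_fst))
    have hexpInt : Integrable (fun s => Real.exp (δ * s)) μ := integrableOn_exp_mul_Iic hδ 0
    have hbInt : Integrable (fun p : ℝ × ℝ =>
        (Real.exp (δ * p.1) * R) * (Real.exp (δ * p.2) * R)) (μ.prod μ) :=
      (hexpInt.mul_const R).mul_prod (hexpInt.mul_const R)
    have hptw : ∀ ω (p : ℝ × ℝ), ‖g ω p‖
        ≤ (Real.exp (δ * p.1) * R) * (Real.exp (δ * p.2) * R) := by
      intro ω p
      have e1 := (Real.exp_pos (δ * p.1)).le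
      have e2 := (Real.exp_pos (δ * p.2)).le
      have h1 := hR2 p.1 ω i
      have h2 := hR2 p.2 ω j
      have ha := abs_nonneg (Ebar p.1 ω i)
      have hb' := abs_nonneg (Ebar p.2 ω j)
      calc ‖g ω p‖ = (Real.exp (δ * p.1) * |Ebar p.1 ω i|)
            * (Real.exp (δ * p.2) * |Ebar p.2 ω j|) := by
            rw [Real.norm_eq_abs, hg]
            simp only []
            rw [abs_mul, abs_mul, abs_mul, abs_of_nonneg e1, abs_of_nonneg e2]
        _ ≤ (Real.exp (δ * p.1) * R) * (Real.exp (δ * p.2) * R) :=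
            mul_le_mul (mul_le_mul_of_nonneg_left h1 e1) (mul_le_mul_of_nonneg_left h2 e2)
              (mul_nonneg e2 hb') (mul_nonneg e1 hR)
    have hgω : ∀ ω, Integrable (g ω) (μ.prod μ) := by
      intro ω
      refine Integrable.mono' hbInt
        (hgm.comp (measurable_const.prodMk measurable_id)).aestronglyMeasurable
        (Eventually.of_forall fun p => hptw ω p)
    have hgInt : Integrable (Function.uncurry g) (P.prod (μ.prod μ)) := by
      rw [integrable_prod_iff hgm.aestronglyMeasurable]
      constructor
      · exact Eventually.of_forall hgω
      · have hsm2 : StronglyMeasurable fun ω => ∫ p, ‖g ω p‖ ∂(μ.prod μ) := by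
          have : StronglyMeasurable fun z : Ω × (ℝ × ℝ) => ‖Function.uncurry g z‖ :=
            hgm.norm.stronglyMeasurable
          exact this.integral_prod_right'
        refine Integrable.mono' (integrable_const (∫ p : ℝ × ℝ,
          (Real.exp (δ * p.1) * R) * (Real.exp (δ * p.2) * R) ∂(μ.prod μ)))
          hsm2.aestronglyMeasurable (Eventually.of_forall fun ω => ?_)
        rw [Real.norm_eq_abs, abs_of_nonneg (integral_nonneg fun p => norm_nonneg _)]
        exact integral_mono (hgω ω).norm hbInt fun p => hptw ω p
    have step1 : (∫ ω, Y ω i * Y ω j ∂P) = ∫ ω, ∫ p, g ω p ∂(μ.prod μ) ∂P := by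
      congr 1
      funext ω
      rw [hYi ω i, hYi ω j, ← integral_prod_mul]
    have e1 : (∫ ω, Y ω i * Y ω j ∂P)
        = ∫ z : Ω × (ℝ × ℝ), Function.uncurry g z ∂(P.prod (μ.prod μ)) := by
      rw [step1]
      exact MeasureTheory.integral_integral hgInt
    have e2 : (∫ z : Ω × (ℝ × ℝ), Function.uncurry g z ∂(P.prod (μ.prod μ)))
        = ∫ p : ℝ × ℝ, ∫ ω, g ω p ∂P ∂(μ.prod μ) :=
      MeasureTheory.integral_prod_symm _ hgInt
    have e3 : (∫ p : ℝ × ℝ, ∫ ω, g ω p ∂P ∂(μ.prod μ))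
        = ∫ p : ℝ × ℝ, Real.exp (δ * p.1) * Real.exp (δ * p.2) * Γ (p.1 - p.2) i j
          ∂(μ.prod μ) := by
      congr 1
      funext p
      have hgp : (fun ω => g ω p) = fun ω =>
          (Real.exp (δ * p.1) * Real.exp (δ * p.2)) * (Ebar p.1 ω i * Ebar p.2 ω j) := by
        funext ω
        simp only [hg]
        ring
      rw [hgp, MeasureTheory.integral_const_mul, hΓ p.1 p.2 i j]
    rw [e1, e2, e3]
  have part1 : ∀ i j : Fin N, 2 * δ * (∫ ω, Y ω i * Y ω j ∂P)
      = ∫ t in Set.Ioi (0:ℝ), Real.exp (-(δ * t)) * (Γ t i j + Γ (-t) i j) := by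
    intro i j
    rw [main i j]
    exact det_calc hδ (fun t => Γ t i j) (hΓm i j) (R * R) (hΓb i j)
  have hsymm' : ∀ (t : ℝ) (i j : Fin N), Γ (-t) i j = Γ t j i := by
    intro t i j
    have h1 := hΓ 0 t i j
    rw [zero_sub] at h1
    have h2 := hΓ t 0 j i
    rw [sub_zero] at h2
    rw [← h1, ← h2]
    congr 1
    funext ω
    ring
  have hsym : (Matrix.of fun i j : Fin N =>
      ∫ t in Set.Ioi (0:ℝ), Real.exp (-(δ * t)) * (Γ t i j + Γ (-t) i j)).IsSymm := by
    refine Matrix.ext fun i j => ?_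
    simp only [Matrix.transpose_apply, Matrix.of_apply]
    congr 1
    funext t
    rw [← hsymm' t i j, hsymm' t j i]
    ring
  refine ⟨part1, hsym, ?_⟩
  rw [Matrix.posSemidef_iff_dotProduct_mulVec]
  constructor
  · refine Matrix.ext fun i j => ?_
    rw [Matrix.conjTranspose_apply, star_trivial]
    exact congrFun (congrFun hsym i) j
  · intro x
    have hq : dotProduct (star x) ((Matrix.of fun i j : Fin N =>
        ∫ t in Set.Ioi (0:ℝ), Real.exp (-(δ * t)) * (Γ t i j + Γ (-t) i j)).mulVec x)
        = ∑ i, ∑ j, (x i * x j) * (2 * δ * ∫ ω, Y ω i * Y ω j ∂P) := by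
      simp only [dotProduct, Matrix.mulVec, Matrix.of_apply, Pi.star_apply,
        star_trivial]
      refine Finset.sum_congr rfl fun i _ => ?_
      rw [Finset.mul_sum]
      refine Finset.sum_congr rfl fun j _ => ?_
      rw [← part1 i j]
      ring
    have hInt2 : ∀ i j : Fin N, Integrable (fun ω => (x i * Y ω i) * (x j * Y ω j)) P := by
      intro i j
      have hrw : (fun ω => (x i * Y ω i) * (x j * Y ω j))
          = fun ω => (x i * x j) * (Y ω i * Y ω j) := funext fun ω => by ring
      rw [hrw]
      exact (hYij i j).const_mul _
    have hsum : (∫ ω, (∑ i, x i * Y ω i) * (∑ j, x j * Y ω j) ∂P)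
        = ∑ i, ∑ j, ∫ ω, (x i * Y ω i) * (x j * Y ω j) ∂P := by
      have hrw : (fun ω => (∑ i, x i * Y ω i) * (∑ j, x j * Y ω j))
          = fun ω => ∑ i, ∑ j, (x i * Y ω i) * (x j * Y ω j) := by
        funext ω
        rw [Finset.sum_mul_sum]
      rw [hrw, integral_finset_sum _ fun i _ => integrable_finset_sum _ fun j _ => hInt2 i j]
      exact Finset.sum_congr rfl fun i _ => integral_finset_sum _ fun j _ => hInt2 i j
    have hfinal : (∑ i, ∑ j, (x i * x j) * (2 * δ * ∫ ω, Y ω i * Y ω j ∂P))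
        = 2 * δ * ∫ ω, (∑ i, x i * Y ω i) * (∑ j, x j * Y ω j) ∂P := by
      rw [hsum, Finset.mul_sum]
      refine Finset.sum_congr rfl fun i _ => ?_
      rw [Finset.mul_sum]
      refine Finset.sum_congr rfl fun j _ => ?_
      have hrw : (fun ω => (x i * Y ω i) * (x j * Y ω j))
          = fun ω => (x i * x j) * (Y ω i * Y ω j) := funext fun ω => by ring
      rw [hrw, MeasureTheory.integral_const_mul]
      ring
    rw [hq, hfinal]
    refine mul_nonneg (by positivity) (integral_nonneg fun ω => ?_)
    have : (∑ i, x i * Y ω i) * (∑ j, x j * Y ω j) = (∑ i, x i * Y ω i) ^ 2 := by rw [sq]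
    rw [this]
    exact sq_nonneg _
end
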